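/- arXiv:2501.13202 — 3 statements merged into one kernel-verified Lean document; each statement's English description precedes it below -/
import Mathlib

section
/- Let (X,δ) be a diversity and D = D_δ the associated distance on the finite subsets of X. If f ∈ T_δ then f − δ ∈ T_D. Moreover, for all f₁,f₂ ∈ T_δ, d∞(f₁ − δ, f₂ − δ) = d∞(f₁,f₂) < ∞, so T_δ embeds isometrically into T_D via f ↦ f − δ. -/
open scoped ENNReal

section CoreDefs

variable {Y : Type*}

/-- A distance space: symmetric, nonnegative, vanishing on the diagonal. -/
def IsDistance (d : Y → Y → ℝ) : Prop :=
  (∀ x y, 0 ≤ d x y) ∧ (∀ x y, d x y = d y x) ∧ ∀ x, d x x = 0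

/-- The set `P_d` of functions dominating the distance `d`. -/
def Pd (d : Y → Y → ℝ) : Set (Y → ℝ) :=
  {f | ∀ x y, d x y ≤ f x + f y}

/-- The tight span `T_d`: pointwise-minimal elements of `P_d`. -/
def Td (d : Y → Y → ℝ) : Set (Y → ℝ) :=
  {f | f ∈ Pd d ∧ ∀ g ∈ Pd d, g ≤ f → g = f}

/-- The sup-distance `d∞(f,g) = sup_x |f x - g x|`, valued in `[0,∞]`. -/
noncomputable def dInfty (f g : Y → ℝ) : ℝ≥0∞ :=
  ⨆ y, edist (f y) (g y)

/-- `κ(x) = {f ∈ T_d : f x = 0}`. -/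
def kappa (d : Y → Y → ℝ) (x : Y) : Set (Y → ℝ) :=
  {f | f ∈ Td d ∧ f x = 0}

/-- A pseudometric: symmetric, nonnegative, vanishing on the diagonal,
satisfying the triangle inequality. -/
def IsPseudometric (ρ : Y → Y → ℝ) : Prop :=
  (∀ x y, 0 ≤ ρ x y) ∧ (∀ x y, ρ x y = ρ y x) ∧ (∀ x, ρ x x = 0) ∧
  ∀ x y z, ρ x z ≤ ρ x y + ρ y z

/-- `M(d)`: the set of pseudometrics dominating `d`. -/
def Md (d : Y → Y → ℝ) : Set (Y → Y → ℝ) :=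
  {ρ | IsPseudometric ρ ∧ ∀ x y, d x y ≤ ρ x y}

end CoreDefs

section DivDefs

variable {X : Type*} [DecidableEq X]

/-- A diversity on `X`: a nonnegative function on finite subsets which
vanishes exactly on sets of at most one element and satisfies the diversity
triangle inequality. -/
def IsDiversity (δ : Finset X → ℝ) : Prop :=
  (∀ A, 0 ≤ δ A) ∧ (∀ A : Finset X, δ A = 0 ↔ A.card ≤ 1) ∧
  ∀ A B C : Finset X, B.Nonempty → δ (A ∪ C) ≤ δ (A ∪ B) + δ (B ∪ C)

/-- The distance `D_δ` on finite subsets associated to a diversity `δ`. -/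
def Ddelta (δ : Finset X → ℝ) (A B : Finset X) : ℝ :=
  max (δ (A ∪ B) - δ A - δ B) 0

/-- `P_δ` for a diversity `δ`. -/
def Pdelta (δ : Finset X → ℝ) : Set (Finset X → ℝ) :=
  {f | f ∅ = 0 ∧ ∀ Cc : Finset (Finset X), Cc.Nonempty →
    (∀ C ∈ Cc, C.Nonempty) → δ (Cc.sup id) ≤ ∑ C ∈ Cc, f C}

/-- The tight span `T_δ` of a diversity `δ`. -/
def Tdelta (δ : Finset X → ℝ) : Set (Finset X → ℝ) :=
  {f | f ∈ Pdelta δ ∧ ∀ g ∈ Pdelta δ, g ≤ f → g = f}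

/-- The relaxation `P_δ^{(2)}` using only pairs of finite sets. -/
def Pdelta2 (δ : Finset X → ℝ) : Set (Finset X → ℝ) :=
  {f | f ∅ = 0 ∧ ∀ A B : Finset X, δ (A ∪ B) ≤ f A + f B}

/-- The minimal elements `T_δ^{(2)}` of `P_δ^{(2)}`. -/
def Tdelta2 (δ : Finset X → ℝ) : Set (Finset X → ℝ) :=
  {f | f ∈ Pdelta2 δ ∧ ∀ g ∈ Pdelta2 δ, g ≤ f → g = f}

/-- `B_A = {x ∈ X : δ(A ∪ {x}) ≤ δ(A)}`. -/
def Bset (δ : Finset X → ℝ) (A : Finset X) : Set X :=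
  {x | δ (A ∪ {x}) ≤ δ A}

/-- A hyperconvex diversity. -/
def DivHyperconvex (δ : Finset X → ℝ) : Prop :=
  ∀ (ι : Type*) (A : ι → Finset X) (r : ι → ℝ), (∀ γ, 0 ≤ r γ) →
    (∀ G : Finset ι, G.Nonempty → δ (G.sup A) ≤ ∑ γ ∈ G, r γ) →
    ∃ z : X, ∀ γ, δ (A γ ∪ {z}) ≤ r γ

end DivDefs

section AuxLemmas

variable {X : Type*} [DecidableEq X] {δ : Finset X → ℝ}

lemma aux_delta_empty (hδ : IsDiversity δ) : δ (∅ : Finset X) = 0 := by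
  rw [hδ.2.1]; simp

lemma aux_delta_le (hδ : IsDiversity δ) {f : Finset X → ℝ} (hf : f ∈ Pdelta δ)
    (A : Finset X) : δ A ≤ f A := by
  rcases A.eq_empty_or_nonempty with h | h
  · subst h; rw [hf.1, aux_delta_empty hδ]
  · have := hf.2 {A} ⟨A, by simp⟩ (by simpa using h)
    simpa using this

lemma aux_f_nonneg (hδ : IsDiversity δ) {f : Finset X → ℝ} (hf : f ∈ Pdelta δ)
    (A : Finset X) : 0 ≤ f A := le_trans (hδ.1 A) (aux_delta_le hδ hf A)

lemma aux_pair (hδ : IsDiversity δ) {f : Finset X → ℝ} (hf : f ∈ Pdelta δ)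
    (A B : Finset X) : δ (A ∪ B) ≤ f A + f B := by
  rcases A.eq_empty_or_nonempty with hA | hA
  · subst hA
    simpa [hf.1] using add_le_add (le_refl (0:ℝ)) (aux_delta_le hδ hf B)
  rcases B.eq_empty_or_nonempty with hB | hB
  · subst hB
    have := aux_delta_le hδ hf A
    simpa [hf.1] using this
  by_cases hAB : A = B
  · subst hAB
    have h1 := aux_delta_le hδ hf A
    have h2 := aux_f_nonneg hδ hf A
    simpa using le_trans h1 (by linarith)
  · have := hf.2 {A, B} ⟨A, by simp⟩ (by
      intro C hC
      rcases Finset.mem_insert.1 hC with rfl | hC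
      · exact hA
      · simpa using Finset.mem_singleton.1 hC ▸ hB)
    rw [Finset.sum_pair hAB] at this
    simpa using this

/-- A minimality test: if `c` dominates all "star" bounds at `A`, then `f A ≤ c`. -/
lemma aux_minTest (hδ : IsDiversity δ) {f : Finset X → ℝ} (hf : f ∈ Tdelta δ)
    {A : Finset X} (hA : A.Nonempty) {c : ℝ}
    (h : ∀ Dc : Finset (Finset X), A ∉ Dc → (∀ C ∈ Dc, C.Nonempty) →
      δ (A ∪ Dc.sup id) ≤ c + ∑ C ∈ Dc, f C) :
    f A ≤ c := by
  set g : Finset X → ℝ := fun C => if C = A then min (f A) c else f C with hg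
  have hgle : g ≤ f := by
    intro C
    simp only [hg]
    split
    · next h' => subst h'; exact min_le_left _ _
    · exact le_refl _
  have hAne : (∅ : Finset X) ≠ A := by
    intro h'; exact hA.ne_empty h'.symm
  have hgP : g ∈ Pdelta δ := by
    constructor
    · simp only [hg, if_neg hAne]; exact hf.1.1
    · intro Dc hne hN
      by_cases hAD : A ∈ Dc
      · have hrw : insert A (Dc.erase A) = Dc := Finset.insert_erase hAD
        have hsum : ∑ C ∈ Dc, g C = min (f A) c + ∑ C ∈ Dc.erase A, f C := by
          rw [← Finset.add_sum_erase _ g hAD]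
          congr 1
          · simp [hg]
          · apply Finset.sum_congr rfl
            intro C hC
            simp [hg, Finset.ne_of_mem_erase hC]
        have hsup : Dc.sup id = A ∪ (Dc.erase A).sup id := by
          conv_lhs => rw [← hrw]
          rw [Finset.sup_insert, Finset.sup_eq_union]
          rfl
        rw [hsum]
        rcases le_total (f A) c with hle | hle
        · rw [min_eq_left hle]
          have hP := hf.1.2 Dc hne hN
          rw [← Finset.add_sum_erase _ f hAD] at hP
          exact hP
        · rw [min_eq_right hle, hsup]
          exact h (Dc.erase A) (Finset.notMem_erase _ _)
            (fun C hC => hN C (Finset.mem_of_mem_erase hC))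
      · have hsum : ∑ C ∈ Dc, g C = ∑ C ∈ Dc, f C := by
          apply Finset.sum_congr rfl
          intro C hC
          have : C ≠ A := fun h' => hAD (h' ▸ hC)
          simp [hg, this]
        rw [hsum]
        exact hf.1.2 Dc hne hN
  have heq : g = f := hf.2 g hgP hgle
  have : g A = f A := congrFun heq A
  rw [show g A = min (f A) c by simp [hg]] at this
  rw [← this]
  exact min_le_right _ _

/-- Subadditivity of tight-span elements over unions. -/
lemma aux_subadd (hδ : IsDiversity δ) {f : Finset X → ℝ} (hf : f ∈ Tdelta δ)
    (Cc : Finset (Finset X)) (hne : Cc.Nonempty) (hN : ∀ C ∈ Cc, C.Nonempty) :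
    f (Cc.sup id) ≤ ∑ C ∈ Cc, f C := by
  obtain ⟨C₀, hC₀⟩ := hne
  have hsupne : (Cc.sup id).Nonempty := by
    obtain ⟨x, hx⟩ := hN C₀ hC₀
    exact ⟨x, Finset.mem_of_subset (Finset.le_sup (f := id) hC₀) hx⟩
  apply aux_minTest hδ hf hsupne
  intro Dc hAD hDN
  have hsup : (Cc ∪ Dc).sup id = Cc.sup id ∪ Dc.sup id := by
    rw [Finset.sup_union, Finset.sup_eq_union]
  have hP := hf.1.2 (Cc ∪ Dc) ⟨C₀, Finset.mem_union_left _ hC₀⟩ (by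
    intro C hC
    rcases Finset.mem_union.1 hC with h' | h'
    · exact hN C h'
    · exact hDN C h')
  rw [hsup] at hP
  have hsum : ∑ C ∈ Cc ∪ Dc, f C ≤ ∑ C ∈ Cc, f C + ∑ C ∈ Dc, f C := by
    have h1 := Finset.sum_union_inter (s₁ := Cc) (s₂ := Dc) (f := f)
    have h2 : 0 ≤ ∑ C ∈ Cc ∩ Dc, f C :=
      Finset.sum_nonneg fun C _ => aux_f_nonneg hδ hf.1 C
    linarith
  exact le_trans hP hsum

/-- Lipschitz property of tight-span elements. -/
lemma aux_lip (hδ : IsDiversity δ) {f : Finset X → ℝ} (hf : f ∈ Tdelta δ)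
    {A B : Finset X} (hA : A.Nonempty) (hB : B.Nonempty) :
    f A ≤ δ (A ∪ B) + f B := by
  apply aux_minTest hδ hf hA
  intro Dc _ hDN
  have tri := hδ.2.2 A B (Dc.sup id) hB
  have h2 : δ (B ∪ Dc.sup id) ≤ f B + ∑ C ∈ Dc, f C := by
    by_cases hBD : B ∈ Dc
    · have hBle : B ⊆ Dc.sup id := Finset.le_sup (f := id) hBD
      have : B ∪ Dc.sup id = Dc.sup id := Finset.union_eq_right.mpr hBle
      rw [this]
      have hP := hf.1.2 Dc ⟨B, hBD⟩ hDN
      have := aux_f_nonneg hδ hf.1 B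
      linarith
    · have hP := hf.1.2 (insert B Dc) (Finset.insert_nonempty _ _) (by
        intro C hC
        rcases Finset.mem_insert.1 hC with rfl | h'
        · exact hB
        · exact hDN C h')
      rw [Finset.sum_insert hBD, Finset.sup_insert, Finset.sup_eq_union] at hP
      exact hP
  linarith

end AuxLemmas

/-- If `f ∈ T_δ` then `f - δ ∈ T_{D_δ}`, and `f ↦ f - δ` is an isometric
embedding of `(T_δ, d∞)` into `(T_{D_δ}, d∞)`, with all distances finite. -/
theorem statement16 {X : Type*} [DecidableEq X] (δ : Finset X → ℝ)
    (hδ : IsDiversity δ) :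
    (∀ f ∈ Tdelta δ, f - δ ∈ Td (Ddelta δ)) ∧
    ∀ f₁ ∈ Tdelta δ, ∀ f₂ ∈ Tdelta δ,
      dInfty (f₁ - δ) (f₂ - δ) = dInfty f₁ f₂ ∧ dInfty f₁ f₂ ≠ ⊤ := by
  constructor
  · -- f - δ ∈ Td (Ddelta δ)
    intro f hf
    constructor
    · -- membership in Pd
      intro A B
      simp only [Pi.sub_apply]
      apply max_le
      · have h1 := aux_pair hδ hf.1 A B
        have h2 := hδ.1 (A ∪ B)
        linarith
      · have h1 := aux_delta_le hδ hf.1 A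
        have h2 := aux_delta_le hδ hf.1 B
        linarith
    · -- minimality
      intro g hg hgle
      have hkey : ∀ A : Finset X, g A = f A - δ A := by
        intro A
        have hle : g A ≤ f A - δ A := by
          have := hgle A; simpa using this
        have hgnn : 0 ≤ g A := by
          have := hg A A
          have hD : 0 ≤ Ddelta δ A A := le_max_right _ _
          linarith
        rcases A.eq_empty_or_nonempty with hAe | hAne
        · subst hAe
          have : f (∅ : Finset X) - δ ∅ = 0 := by
            rw [hf.1.1, aux_delta_empty hδ]; ring
          linarith
        · have hge : f A ≤ g A + δ A := by
            apply aux_minTest hδ hf hAne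
            intro Dc hAD hDN
            rcases Dc.eq_empty_or_nonempty with hDe | hDne
            · subst hDe
              simp only [Finset.sup_empty, Finset.sum_empty, add_zero]
              have : A ∪ (⊥ : Finset X) = A := by simp
              rw [this]
              have := aux_delta_le hδ hf.1 A
              linarith
            · set U := Dc.sup id with hU
              have hgU : g U ≤ f U - δ U := by
                have := hgle U; simpa using this
              have hDd : δ (A ∪ U) - δ A - δ U ≤ g A + g U := by
                have := hg A U
                have : Ddelta δ A U ≤ g A + g U := this
                exact le_trans (le_max_left _ _) this
              have hsub : f U ≤ ∑ C ∈ Dc, f C := aux_subadd hδ hf Dc hDne hDN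
              linarith
          linarith
      funext A
      rw [hkey A]
      simp
  · -- isometry and finiteness
    intro f₁ hf₁ f₂ hf₂
    have hptwise : ∀ A : Finset X,
        edist ((f₁ - δ) A) ((f₂ - δ) A) = edist (f₁ A) (f₂ A) := by
      intro A
      simp only [Pi.sub_apply]
      rw [edist_dist, edist_dist, dist_sub_right]
    constructor
    · unfold dInfty
      exact iSup_congr hptwise
    · rcases isEmpty_or_nonempty X with hX | hX
      · have hzero : ∀ A : Finset X, edist (f₁ A) (f₂ A) = 0 := by
          intro A
          have hA : A = ∅ := Finset.eq_empty_of_forall_notMem fun x _ => hX.elim x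
          subst hA
          rw [hf₁.1.1, hf₂.1.1]
          simp
        unfold dInfty
        rw [iSup_congr hzero]
        simp
      · obtain ⟨x₀⟩ := hX
        set B : Finset X := {x₀} with hB
        have hBne : B.Nonempty := ⟨x₀, by simp [hB]⟩
        set M : ℝ := f₁ B + f₂ B with hM
        have hMnn : 0 ≤ M := add_nonneg (aux_f_nonneg hδ hf₁.1 B) (aux_f_nonneg hδ hf₂.1 B)
        have hbound : ∀ A : Finset X, edist (f₁ A) (f₂ A) ≤ ENNReal.ofReal M := by
          intro A
          rw [edist_dist, Real.dist_eq]
          apply ENNReal.ofReal_le_ofReal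
          rcases A.eq_empty_or_nonempty with hAe | hAne
          · subst hAe
            rw [hf₁.1.1, hf₂.1.1]
            simpa using hMnn
          · rw [abs_sub_le_iff]
            constructor
            · have h1 := aux_lip hδ hf₁ hAne hBne
              have h2 := aux_pair hδ hf₂.1 A B
              linarith
            · have h1 := aux_lip hδ hf₂ hAne hBne
              have h2 := aux_pair hδ hf₁.1 A B
              linarith
        have : dInfty f₁ f₂ ≤ ENNReal.ofReal M := iSup_le hbound
        exact ne_top_of_le_ne_top ENNReal.ofReal_ne_top this
end

section
/- Let (X,δ) be a diversity and D = D_δ. The following are equivalent: (i) P_δ = P_δ^{(2)}; (ii) T_δ = T_δ^{(2)}; (iii) for all f : Pfin(X) → ℝ, f ∈ T_δ if and only if f − δ ∈ T_D. -/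
open scoped ENNReal

section AuxProof17

variable {X : Type*} [DecidableEq X] {δ : Finset X → ℝ}

lemma aux17_div_empty (hδ : IsDiversity δ) : δ ∅ = 0 :=
  (hδ.2.1 ∅).mpr (by simp)

lemma aux17_Pdelta2_ge {f : Finset X → ℝ} (hf : f ∈ Pdelta2 δ) (A : Finset X) :
    δ A ≤ f A := by
  have h := hf.2 A ∅
  simpa [hf.1] using h

lemma aux17_Ddelta_nonneg (A B : Finset X) : 0 ≤ Ddelta δ A B := le_max_right _ _

lemma aux17_sub_le_Ddelta (A B : Finset X) :
    δ (A ∪ B) - δ A - δ B ≤ Ddelta δ A B := le_max_left _ _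

lemma aux17_Ddelta_empty_left (hδ : IsDiversity δ) (B : Finset X) :
    Ddelta δ ∅ B = 0 := by
  simp [Ddelta, aux17_div_empty hδ]

lemma aux17_Ddelta_empty_right (hδ : IsDiversity δ) (A : Finset X) :
    Ddelta δ A ∅ = 0 := by
  simp [Ddelta, aux17_div_empty hδ]

lemma aux17_Pd_nonneg {g : Finset X → ℝ} (hg : g ∈ Pd (Ddelta δ)) (A : Finset X) :
    0 ≤ g A := by
  have h := hg A A
  have h2 := aux17_Ddelta_nonneg (δ := δ) A A
  linarith

lemma aux17_update_mem_Pd (hδ : IsDiversity δ) {g : Finset X → ℝ}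
    (hg : g ∈ Pd (Ddelta δ)) :
    Function.update g ∅ 0 ∈ Pd (Ddelta δ) ∧ Function.update g ∅ 0 ≤ g := by
  constructor
  · intro A B
    rcases eq_or_ne A ∅ with rfl | hA
    · rcases eq_or_ne B ∅ with rfl | hB
      · simp [Function.update_self, aux17_Ddelta_empty_left hδ]
      · rw [aux17_Ddelta_empty_left hδ]
        rw [Function.update_self, Function.update_of_ne hB]
        have := aux17_Pd_nonneg hg B
        linarith
    · rcases eq_or_ne B ∅ with rfl | hB
      · rw [aux17_Ddelta_empty_right hδ]
        rw [Function.update_self, Function.update_of_ne hA]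
        have := aux17_Pd_nonneg hg A
        linarith
      · rw [Function.update_of_ne hA, Function.update_of_ne hB]
        exact hg A B
  · intro A
    rcases eq_or_ne A ∅ with rfl | hA
    · rw [Function.update_self]; exact aux17_Pd_nonneg hg ∅
    · rw [Function.update_of_ne hA]

lemma aux17_sub_mem_Pd (hδ : IsDiversity δ) {f : Finset X → ℝ}
    (hf : f ∈ Pdelta2 δ) : f - δ ∈ Pd (Ddelta δ) := by
  intro A B
  simp only [Pi.sub_apply]
  apply max_le
  · have := hf.2 A B; linarith
  · have hA := aux17_Pdelta2_ge hf A
    have hB := aux17_Pdelta2_ge hf B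
    linarith

lemma aux17_add_mem_Pdelta2 (hδ : IsDiversity δ) {g : Finset X → ℝ}
    (hg : g ∈ Pd (Ddelta δ)) (h0 : g ∅ = 0) : g + δ ∈ Pdelta2 δ := by
  constructor
  · simp [h0, aux17_div_empty hδ]
  · intro A B
    have h := hg A B
    have h2 := aux17_sub_le_Ddelta (δ := δ) A B
    simp only [Pi.add_apply]
    linarith

/-- Key correspondence: `f ∈ T_δ⁽²⁾ ↔ f - δ ∈ T_{D_δ}`. -/
lemma aux17_Tdelta2_iff (hδ : IsDiversity δ) (f : Finset X → ℝ) :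
    f ∈ Tdelta2 δ ↔ f - δ ∈ Td (Ddelta δ) := by
  constructor
  · rintro ⟨hfP, hfmin⟩
    refine ⟨aux17_sub_mem_Pd hδ hfP, ?_⟩
    intro g hg hgle
    obtain ⟨hg'P, hg'le⟩ := aux17_update_mem_Pd hδ hg
    set g' := Function.update g ∅ 0 with hg'def
    have hg'0 : g' ∅ = 0 := Function.update_self _ _ _
    have hmem : g' + δ ∈ Pdelta2 δ := aux17_add_mem_Pdelta2 hδ hg'P hg'0
    have hle : g' + δ ≤ f := by
      intro A
      have h1 := hgle A
      have h2 := hg'le A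
      simp only [Pi.add_apply, Pi.sub_apply] at *
      linarith
    have heq : g' + δ = f := hfmin _ hmem hle
    funext A
    have h1 : g' A + δ A = f A := congrFun heq A
    have h2 : g' A ≤ g A := hg'le A
    have h3 : g A ≤ f A - δ A := hgle A
    simp only [Pi.sub_apply]
    linarith
  · rintro ⟨hgP, hgmin⟩
    obtain ⟨hg'P, hg'le⟩ := aux17_update_mem_Pd hδ hgP
    have heq0 : Function.update (f - δ) ∅ 0 = f - δ := hgmin _ hg'P hg'le
    have h0 : (f - δ) ∅ = 0 := by
      conv_lhs => rw [← heq0]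
      exact Function.update_self _ _ _
    have hfP : f ∈ Pdelta2 δ := by
      have hfd : (f - δ) + δ = f := by funext A; simp
      rw [← hfd]
      exact aux17_add_mem_Pdelta2 hδ hgP h0
    refine ⟨hfP, ?_⟩
    intro h hh hhle
    have hsub : h - δ ∈ Pd (Ddelta δ) := aux17_sub_mem_Pd hδ hh
    have hle : h - δ ≤ f - δ := by
      intro A
      simp only [Pi.sub_apply]
      exact sub_le_sub_right (hhle A) _
    have heq := hgmin _ hsub hle
    funext A
    have h1 := congrFun heq A
    simp only [Pi.sub_apply] at h1
    linarith

/-- Zorn: every element of `P_δ⁽²⁾` dominates a minimal one. -/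
lemma aux17_exists_min (hδ : IsDiversity δ) {f : Finset X → ℝ} (hf : f ∈ Pdelta2 δ) :
    ∃ g ∈ Pdelta2 δ, g ≤ f ∧ ∀ h ∈ Pdelta2 δ, h ≤ g → h = g := by
  have hchaincond : ∀ c ⊆ {g : (Finset X → ℝ)ᵒᵈ | OrderDual.ofDual g ∈ Pdelta2 δ},
      IsChain (· ≤ ·) c → ∀ y ∈ c,
      ∃ ub ∈ {g : (Finset X → ℝ)ᵒᵈ | OrderDual.ofDual g ∈ Pdelta2 δ}, ∀ z ∈ c, z ≤ ub := by
    intro c hcs hchain y hy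
    set g : Finset X → ℝ := fun A => sInf ((fun h : (Finset X → ℝ)ᵒᵈ => OrderDual.ofDual h A) '' c) with hgdef
    have hne : ∀ A : Finset X, ((fun h : (Finset X → ℝ)ᵒᵈ => OrderDual.ofDual h A) '' c).Nonempty :=
      fun A => ⟨_, ⟨y, hy, rfl⟩⟩
    have hbdd : ∀ A : Finset X, BddBelow ((fun h : (Finset X → ℝ)ᵒᵈ => OrderDual.ofDual h A) '' c) := by
      intro A
      refine ⟨δ A, ?_⟩
      rintro _ ⟨h, hh, rfl⟩
      exact aux17_Pdelta2_ge (hcs hh) A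
    have hgle : ∀ h ∈ c, ∀ A, g A ≤ OrderDual.ofDual h A :=
      fun h hh A => csInf_le (hbdd A) ⟨h, hh, rfl⟩
    have hg0 : g ∅ = 0 := by
      refine le_antisymm ?_ ?_
      · have h1 := hgle y hy ∅
        rwa [(hcs hy).1] at h1
      · refine le_csInf (hne ∅) ?_
        rintro _ ⟨h, hh, rfl⟩
        exact le_of_eq ((hcs hh).1).symm
    have hgmem : g ∈ Pdelta2 δ := by
      refine ⟨hg0, ?_⟩
      intro A B
      refine le_of_forall_pos_le_add ?_
      intro ε hε
      obtain ⟨a, ⟨h₁, hh₁, rfl⟩, ha⟩ := Real.lt_sInf_add_pos (hne A) (half_pos hε)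
      obtain ⟨b, ⟨h₂, hh₂, rfl⟩, hb⟩ := Real.lt_sInf_add_pos (hne B) (half_pos hε)
      rcases hchain.total hh₁ hh₂ with hle | hle
      · -- in dual order h₁ ≤ h₂ means ofDual h₂ ≤ ofDual h₁
        have hAB := (hcs hh₂).2 A B
        have h1 : OrderDual.ofDual h₂ A ≤ OrderDual.ofDual h₁ A := hle A
        have h2 : OrderDual.ofDual h₂ B < sInf ((fun h : (Finset X → ℝ)ᵒᵈ => OrderDual.ofDual h B) '' c) + ε / 2 := hb
        have h3 : OrderDual.ofDual h₁ A < sInf ((fun h : (Finset X → ℝ)ᵒᵈ => OrderDual.ofDual h A) '' c) + ε / 2 := ha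
        simp only [hgdef]
        linarith
      · have hAB := (hcs hh₁).2 A B
        have h1 : OrderDual.ofDual h₁ B ≤ OrderDual.ofDual h₂ B := hle B
        have h2 : OrderDual.ofDual h₂ B < sInf ((fun h : (Finset X → ℝ)ᵒᵈ => OrderDual.ofDual h B) '' c) + ε / 2 := hb
        have h3 : OrderDual.ofDual h₁ A < sInf ((fun h : (Finset X → ℝ)ᵒᵈ => OrderDual.ofDual h A) '' c) + ε / 2 := ha
        simp only [hgdef]
        linarith
    refine ⟨OrderDual.toDual g, hgmem, ?_⟩
    intro z hz
    exact hgle z hz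
  obtain ⟨m, hfm, hm⟩ := zorn_le_nonempty₀ (α := (Finset X → ℝ)ᵒᵈ)
      {g : (Finset X → ℝ)ᵒᵈ | OrderDual.ofDual g ∈ Pdelta2 δ} hchaincond
      (OrderDual.toDual f) hf
  refine ⟨OrderDual.ofDual m, hm.1, hfm, ?_⟩
  intro h hh hhm
  have hmh : m ≤ OrderDual.toDual h := hhm
  exact le_antisymm hhm (hm.2 hh hmh)

/-- `P_δ ⊆ P_δ⁽²⁾` always. -/
lemma aux17_Pdelta_subset (hδ : IsDiversity δ) : Pdelta δ ⊆ Pdelta2 δ := by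
  intro f hf
  have hpos : ∀ A : Finset X, A.Nonempty → δ A ≤ f A := by
    intro A hA
    have h := hf.2 {A} (Finset.singleton_nonempty A) (by simpa using hA)
    simpa using h
  refine ⟨hf.1, ?_⟩
  intro A B
  rcases eq_or_ne A ∅ with rfl | hA
  · rcases eq_or_ne B ∅ with rfl | hB
    · simp [hf.1, aux17_div_empty hδ]
    · rw [Finset.empty_union, hf.1]
      have := hpos B (Finset.nonempty_iff_ne_empty.mpr hB)
      linarith
  · rcases eq_or_ne B ∅ with rfl | hB
    · rw [Finset.union_empty, hf.1]
      have := hpos A (Finset.nonempty_iff_ne_empty.mpr hA)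
      linarith
    · rcases eq_or_ne A B with rfl | hAB
      · rw [Finset.union_self]
        have h1 := hpos A (Finset.nonempty_iff_ne_empty.mpr hA)
        have h2 : 0 ≤ f A := le_trans (hδ.1 A) h1
        linarith
      · have h := hf.2 {A, B} (by simp) ?_
        · rw [Finset.sum_pair hAB] at h
          have hsup : ({A, B} : Finset (Finset X)).sup id = A ∪ B := by
            rw [Finset.sup_insert, Finset.sup_singleton]
            rfl
          rwa [hsup] at h
        · intro C hC
          rcases Finset.mem_insert.mp hC with rfl | hC
          · exact Finset.nonempty_iff_ne_empty.mpr hA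
          · rw [Finset.mem_singleton.mp hC]
            exact Finset.nonempty_iff_ne_empty.mpr hB

end AuxProof17

/-- Equivalence of: `P_δ = P_δ⁽²⁾`, `T_δ = T_δ⁽²⁾`, and
`f ∈ T_δ ↔ f - δ ∈ T_{D_δ}` for all `f`. -/
theorem statement17 {X : Type*} [DecidableEq X] (δ : Finset X → ℝ)
    (hδ : IsDiversity δ) :
    List.TFAE
      [Pdelta δ = Pdelta2 δ,
       Tdelta δ = Tdelta2 δ,
       ∀ f : Finset X → ℝ, f ∈ Tdelta δ ↔ f - δ ∈ Td (Ddelta δ)] := by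
  tfae_have 1 → 2 := by
    intro h
    unfold Tdelta Tdelta2
    rw [h]
  tfae_have 2 → 1 := by
    intro h
    apply Set.Subset.antisymm (aux17_Pdelta_subset hδ)
    intro f hf
    obtain ⟨g, hgP, hgle, hgmin⟩ := aux17_exists_min hδ hf
    have hgT : g ∈ Tdelta δ := by
      rw [h]; exact ⟨hgP, hgmin⟩
    refine ⟨hf.1, ?_⟩
    intro Cc hCcne hCne
    exact le_trans (hgT.1.2 Cc hCcne hCne)
      (Finset.sum_le_sum fun C _ => hgle C)
  tfae_have 2 → 3 := by
    intro h f
    rw [h]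
    exact aux17_Tdelta2_iff hδ f
  tfae_have 3 → 2 := by
    intro h
    ext f
    rw [h f]
    exact (aux17_Tdelta2_iff hδ f).symm
  tfae_finish
end

section
/- Let (X,δ) be a hyperconvex diversity and let d be the metric induced by δ on X, d(x,y) := δ({x,y}). Then for all nonempty finite subsets A,B of X, D_δ(A,B) = inf{d(x,y) : x ∈ B_A, y ∈ B_B}. -/
open scoped ENNReal

/-- For a hyperconvex diversity, `D_δ(A,B)` is the infimum of the induced
distances between the sets `B_A` and `B_B`. -/
theorem statement18 {X : Type*} [DecidableEq X] (δ : Finset X → ℝ)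
    (hδ : IsDiversity δ) (hhc : DivHyperconvex δ)
    (A B : Finset X) (hA : A.Nonempty) (hB : B.Nonempty) :
    Ddelta δ A B =
      sInf {r : ℝ | ∃ x ∈ Bset δ A, ∃ y ∈ Bset δ B, r = δ {x, y}} := by
  classical
  set S := {r : ℝ | ∃ x ∈ Bset δ A, ∃ y ∈ Bset δ B, r = δ {x, y}} with hS
  set D := Ddelta δ A B with hD
  have hD0 : 0 ≤ D := le_max_right _ _
  have hDge : δ (A ∪ B) - δ A - δ B ≤ D := le_max_left _ _
  -- D is a lower bound of S
  have hlb : ∀ r ∈ S, D ≤ r := by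
    rintro r ⟨x, hx, y, hy, rfl⟩
    have hx' : δ (A ∪ {x}) ≤ δ A := hx
    have hy' : δ (B ∪ {y}) ≤ δ B := hy
    have h1 : δ (A ∪ B) ≤ δ (A ∪ {x}) + δ ({x} ∪ B) :=
      hδ.2.2 A {x} B (by simp)
    have h2 : δ ({x} ∪ B) ≤ δ ({x} ∪ {y}) + δ ({y} ∪ B) :=
      hδ.2.2 {x} {y} B (by simp)
    have e1 : ({y} ∪ B : Finset X) = B ∪ {y} := Finset.union_comm _ _
    have e2 : ({x} ∪ {y} : Finset X) = {x, y} := by ext a; simp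
    rw [e1, e2] at h2
    apply max_le
    · linarith
    · exact hδ.1 _
  have hApos : 0 ≤ δ A := hδ.1 A
  have hBpos : 0 ≤ δ B := hδ.1 B
  -- first hyperconvexity application
  obtain ⟨z, hz⟩ := hhc (ULift Bool) (fun b => if b.down then A else B)
      (fun b => if b.down then δ A else δ B + D) (by
        rintro ⟨b⟩; cases b
        · simp only [ULift.down]; simp; linarith
        · simp only [ULift.down]; simpa using hApos)
      (by
        rintro G hG
        by_cases ht : (⟨true⟩ : ULift Bool) ∈ G <;>
          by_cases hf : (⟨false⟩ : ULift Bool) ∈ G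
        · have hGeq : G = {⟨true⟩, ⟨false⟩} := by
            ext b; rcases b with ⟨b⟩; cases b <;> simp [ht, hf]
          subst hGeq
          have hne : (⟨true⟩ : ULift Bool) ∉ ({⟨false⟩} : Finset (ULift Bool)) := by
            simp
          rw [Finset.sup_insert, Finset.sup_singleton,
            Finset.sum_insert hne, Finset.sum_singleton]
          simp only [ULift.down, if_true, Bool.false_eq_true, if_false,
            Finset.sup_eq_union]
          linarith
        · have hGeq : G = {⟨true⟩} := by
            ext b; rcases b with ⟨b⟩; cases b <;> simp [ht, hf]
          subst hGeq
          rw [Finset.sup_singleton, Finset.sum_singleton]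
          simp
        · have hGeq : G = {⟨false⟩} := by
            ext b; rcases b with ⟨b⟩; cases b <;> simp [ht, hf]
          subst hGeq
          rw [Finset.sup_singleton, Finset.sum_singleton]
          simp only [ULift.down, Bool.false_eq_true, if_false]
          linarith
        · exact absurd hG (by
            rw [Finset.nonempty_iff_ne_empty, not_not]
            ext b; rcases b with ⟨b⟩; cases b <;> simp [ht, hf]))
  have hzA : δ (A ∪ {z}) ≤ δ A := by simpa using hz ⟨true⟩
  have hzB : δ (B ∪ {z}) ≤ δ B + D := by simpa using hz ⟨false⟩
  have hzcard : δ ({z} : Finset X) = 0 := (hδ.2.1 _).2 (by simp)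
  -- second hyperconvexity application
  obtain ⟨y, hy⟩ := hhc (ULift Bool) (fun b => if b.down then B else {z})
      (fun b => if b.down then δ B else D) (by
        rintro ⟨b⟩; cases b
        · simpa using hD0
        · simpa using hBpos)
      (by
        rintro G hG
        by_cases ht : (⟨true⟩ : ULift Bool) ∈ G <;>
          by_cases hf : (⟨false⟩ : ULift Bool) ∈ G
        · have hGeq : G = {⟨true⟩, ⟨false⟩} := by
            ext b; rcases b with ⟨b⟩; cases b <;> simp [ht, hf]
          subst hGeq
          have hne : (⟨true⟩ : ULift Bool) ∉ ({⟨false⟩} : Finset (ULift Bool)) := by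
            simp
          rw [Finset.sup_insert, Finset.sup_singleton,
            Finset.sum_insert hne, Finset.sum_singleton]
          simp only [ULift.down, if_true, Bool.false_eq_true, if_false,
            Finset.sup_eq_union]
          linarith [hzB]
        · have hGeq : G = {⟨true⟩} := by
            ext b; rcases b with ⟨b⟩; cases b <;> simp [ht, hf]
          subst hGeq
          rw [Finset.sup_singleton, Finset.sum_singleton]
          simp
        · have hGeq : G = {⟨false⟩} := by
            ext b; rcases b with ⟨b⟩; cases b <;> simp [ht, hf]
          subst hGeq
          rw [Finset.sup_singleton, Finset.sum_singleton]
          simp only [ULift.down, Bool.false_eq_true, if_false]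
          linarith [hzcard]
        · exact absurd hG (by
            rw [Finset.nonempty_iff_ne_empty, not_not]
            ext b; rcases b with ⟨b⟩; cases b <;> simp [ht, hf]))
  have hyB : δ (B ∪ {y}) ≤ δ B := by simpa using hy ⟨true⟩
  have hyz : δ ({z} ∪ {y} : Finset X) ≤ D := by simpa using hy ⟨false⟩
  have e3 : ({z} ∪ {y} : Finset X) = {z, y} := by ext a; simp
  rw [e3] at hyz
  have hmem : δ ({z, y} : Finset X) ∈ S := ⟨z, hzA, y, hyB, rfl⟩
  refine le_antisymm (le_csInf ⟨_, hmem⟩ hlb) ?_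
  exact le_trans (csInf_le ⟨D, hlb⟩ hmem) hyz
end
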